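/- Let V ⊂ ℝ² be a Euclidean TSP instance and T a 2-optimal tour for V. If V' is a subdivision for (V,T), then the tour T' induced by V' is a 2-optimal tour for V'. -/

import Mathlib

open Classical

/-- The `p`-norm distance between two points of `ℝ²`. For `p = 2` this is the
Euclidean distance. -/
noncomputable def pdist (p : ℝ) (a b : ℝ × ℝ) : ℝ :=
  (|a.1 - b.1| ^ p + |a.2 - b.2| ^ p) ^ (1 / p)

/-- `L` is a tour (Hamiltonian cycle) of the finite point set `V`. -/
def IsTour (V : Finset (ℝ × ℝ)) (L : List (ℝ × ℝ)) : Prop :=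
  L.Nodup ∧ L.toFinset = V

/-- The (oriented) tour `L` is 2-optimal: for any two distinct directed edges
`(a,b)` and `(x,y)` of the tour, `c(a,x) + c(b,y) ≥ c(a,b) + c(x,y)`. -/
def IsTwoOptimal (p : ℝ) (L : List (ℝ × ℝ)) : Prop :=
  ∀ e ∈ L.zip (L.rotate 1), ∀ f ∈ L.zip (L.rotate 1), e ≠ f →
    pdist p e.1 e.2 + pdist p f.1 f.2 ≤ pdist p e.1 f.1 + pdist p e.2 f.2

/-- The tour `T'` is induced by subdividing the tour `T`: for each vertex `a` of
`T` there is a list `F a` of points, all lying in the interior of the tour edge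
leaving `a` and ordered along this edge, such that `T'` is obtained from `T` by
inserting, after each vertex `a`, the points `F a`.  In particular `T'` and `T`
trace the same polygon in `ℝ²`. -/
def InducedBy (T T' : List (ℝ × ℝ)) : Prop :=
  ∃ F : (ℝ × ℝ) → List (ℝ × ℝ),
    T' = (T.map fun a => a :: F a).flatten ∧
    ∀ e ∈ T.zip (T.rotate 1),
      (∀ z ∈ F e.1, z ∈ openSegment ℝ e.1 e.2) ∧
      List.Chain' (fun u v => v ∈ segment ℝ u e.2) (e.1 :: F e.1)

/-! ### Auxiliary metric lemmas -/

noncomputable def emb (v : ℝ × ℝ) : EuclideanSpace ℝ (Fin 2) :=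
  (WithLp.equiv 2 (Fin 2 → ℝ)).symm ![v.1, v.2]

lemma pdist_eq_dist (a b : ℝ × ℝ) : pdist 2 a b = dist (emb a) (emb b) := by
  rw [EuclideanSpace.dist_eq]
  simp only [emb, WithLp.equiv_symm_apply, PiLp.toLp_apply]
  rw [Fin.sum_univ_two]
  simp only [Matrix.cons_val_zero, Matrix.cons_val_one, Matrix.head_cons, Real.dist_eq]
  rw [pdist, Real.sqrt_eq_rpow]
  norm_num

lemma emb_segment {a c b : ℝ × ℝ} (h : b ∈ segment ℝ a c) :
    emb b ∈ segment ℝ (emb a) (emb c) := by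
  obtain ⟨u, v, hu, hv, huv, hb⟩ := h
  refine ⟨u, v, hu, hv, huv, ?_⟩
  subst hb
  ext i
  fin_cases i <;>
    simp [emb, WithLp.equiv_symm_apply, PiLp.toLp_apply, PiLp.add_apply, PiLp.smul_apply, Prod.add_def,
      Prod.smul_def, smul_eq_mul]

lemma pdist_add_of_mem_segment {a c b : ℝ × ℝ} (h : b ∈ segment ℝ a c) :
    pdist 2 a b + pdist 2 b c = pdist 2 a c := by
  rw [pdist_eq_dist, pdist_eq_dist, pdist_eq_dist]
  exact dist_add_dist_of_mem_segment (emb_segment h)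

lemma pdist_comm (a b : ℝ × ℝ) : pdist 2 a b = pdist 2 b a := by
  rw [pdist_eq_dist, pdist_eq_dist, dist_comm]

lemma pdist_triangle (a b c : ℝ × ℝ) : pdist 2 a c ≤ pdist 2 a b + pdist 2 b c := by
  rw [pdist_eq_dist, pdist_eq_dist, pdist_eq_dist]; exact dist_triangle _ _ _

lemma pdist_nonneg (a b : ℝ × ℝ) : 0 ≤ pdist 2 a b := by
  rw [pdist_eq_dist]; exact dist_nonneg

/-! ### The two key geometric inequalities -/

lemma key_diff {a b x y a' b' x' y' : ℝ × ℝ}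
    (ha' : a' ∈ segment ℝ a b) (hb' : b' ∈ segment ℝ a' b)
    (hx' : x' ∈ segment ℝ x y) (hy' : y' ∈ segment ℝ x' y)
    (h2 : pdist 2 a b + pdist 2 x y ≤ pdist 2 a x + pdist 2 b y) :
    pdist 2 a' b' + pdist 2 x' y' ≤ pdist 2 a' x' + pdist 2 b' y' := by
  have e1 := pdist_add_of_mem_segment ha'
  have e2 := pdist_add_of_mem_segment hb'
  have e3 := pdist_add_of_mem_segment hx'
  have e4 := pdist_add_of_mem_segment hy'
  have t1 : pdist 2 a x ≤ pdist 2 a a' + pdist 2 a' x' + pdist 2 x' x := by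
    calc pdist 2 a x ≤ pdist 2 a a' + pdist 2 a' x := pdist_triangle _ _ _
    _ ≤ pdist 2 a a' + (pdist 2 a' x' + pdist 2 x' x) := by
        have := pdist_triangle a' x' x; linarith
    _ = _ := by ring
  have t2 : pdist 2 b y ≤ pdist 2 b' b + pdist 2 b' y' + pdist 2 y' y := by
    have h1 : pdist 2 b y ≤ pdist 2 b b' + pdist 2 b' y := pdist_triangle _ _ _
    have h2' : pdist 2 b' y ≤ pdist 2 b' y' + pdist 2 y' y := pdist_triangle _ _ _
    have := pdist_comm b b'
    linarith
  have c1 := pdist_comm x' x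
  linarith

lemma key_same {b a' b' x' y' : ℝ × ℝ}
    (h1 : b' ∈ segment ℝ a' b) (h2 : x' ∈ segment ℝ b' b) (h3 : y' ∈ segment ℝ x' b) :
    pdist 2 a' b' + pdist 2 x' y' ≤ pdist 2 a' x' + pdist 2 b' y' := by
  have hx'a : x' ∈ segment ℝ a' b :=
    (convex_segment a' b).segment_subset h1 (right_mem_segment ℝ a' b) h2
  have hy'b : y' ∈ segment ℝ b' b :=
    (convex_segment b' b).segment_subset h2 (right_mem_segment ℝ b' b) h3
  have e1 := pdist_add_of_mem_segment h1
  have e2 := pdist_add_of_mem_segment h2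
  have e3 := pdist_add_of_mem_segment h3
  have e4 := pdist_add_of_mem_segment hx'a
  have e5 := pdist_add_of_mem_segment hy'b
  have := pdist_nonneg b' x'
  linarith

/-! ### Combinatorics of consecutive pairs -/

def pairs {α : Type*} : List α → List (α × α)
  | [] => []
  | [_] => []
  | x :: y :: l => (x, y) :: pairs (y :: l)

lemma pairs_append_cons {α : Type*} (X : List α) (y : α) (Y : List α) :
    pairs (X ++ y :: Y) = pairs (X ++ [y]) ++ pairs (y :: Y) := by
  induction X with
  | nil => simp [pairs]
  | cons x X ih =>
    cases X with
    | nil => simp [pairs]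
    | cons x' X' =>
      simp only [List.cons_append, pairs, List.append_eq] at ih ⊢
      rw [ih]

lemma pairs_eq_zip {α : Type*} (L : List α) (c : α) :
    pairs (L ++ [c]) = L.zip (L.tail ++ [c]) := by
  induction L with
  | nil => simp [pairs]
  | cons x L ih =>
    cases L with
    | nil => simp [pairs]
    | cons y L' =>
      simp only [List.cons_append, pairs, List.tail_cons, List.append_eq] at ih ⊢
      rw [ih]
      rfl

lemma pairs_chain {α : Type*} {R : α → α → Prop} :
    ∀ {P : List α}, List.Chain' R P → ∀ g ∈ pairs P, R g.1 g.2
  | [], _, g, hg => by simp [pairs] at hg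
  | [_], _, g, hg => by simp [pairs] at hg
  | x :: y :: l, h, g, hg => by
    simp only [List.Chain', List.isChain_cons_cons] at h
    simp only [pairs, List.mem_cons] at hg
    rcases hg with rfl | hg
    · exact h.1
    · exact pairs_chain h.2 g hg

lemma pairs_head {α : Type*} {R : α → α → Prop} (hrefl : ∀ x, R x x)
    (htrans : ∀ {u v w}, R u v → R v w → R u w) :
    ∀ {p : α} {l : List α}, List.Chain' R (p :: l) → ∀ g ∈ pairs (p :: l), R p g.1
  | p, [], _, g, hg => by simp [pairs] at hg
  | p, q :: l, h, g, hg => by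
    simp only [List.Chain', List.isChain_cons_cons] at h
    simp only [pairs, List.mem_cons] at hg
    rcases hg with rfl | hg
    · exact hrefl p
    · exact htrans h.1 (pairs_head hrefl htrans h.2 g hg)

lemma pairs_order {α : Type*} {R : α → α → Prop} (hrefl : ∀ x, R x x)
    (htrans : ∀ {u v w}, R u v → R v w → R u w) :
    ∀ {P : List α}, List.Chain' R P → ∀ e ∈ pairs P, ∀ f ∈ pairs P, e ≠ f →
      R e.2 f.1 ∨ R f.2 e.1
  | [], _, e, he, _, _, _ => by simp [pairs] at he
  | [_], _, e, he, _, _, _ => by simp [pairs] at he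
  | x :: y :: l, h, e, he, f, hf, hne => by
    simp only [List.Chain', List.isChain_cons_cons] at h
    simp only [pairs, List.mem_cons] at he hf
    rcases he with rfl | he <;> rcases hf with rfl | hf
    · exact absurd rfl hne
    · exact Or.inl (pairs_head hrefl htrans h.2 f hf)
    · exact Or.inr (pairs_head hrefl htrans h.2 e he)
    · exact pairs_order hrefl htrans h.2 e he f hf hne

lemma structural {α : Type*} (F : α → List α) :
    ∀ (T : List α) (c : α), T ≠ [] →
      pairs ((T.map fun a => a :: F a).flatten ++ [c]) =
        (T.zip (T.tail ++ [c])).flatMap (fun e => pairs ((e.1 :: F e.1) ++ [e.2]))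
  | [], c, h => absurd rfl h
  | [a], c, _ => by simp [pairs_append_cons]
  | a :: a₂ :: T, c, _ => by
    have ih := structural F (a₂ :: T) c (by simp)
    have hflat : ((a₂ :: T).map fun a => a :: F a).flatten
        = a₂ :: (F a₂ ++ (T.map fun a => a :: F a).flatten) := by simp
    calc pairs (((a :: a₂ :: T).map fun a => a :: F a).flatten ++ [c])
        = pairs ((a :: F a) ++ a₂ :: ((F a₂ ++ (T.map fun a => a :: F a).flatten) ++ [c])) := by
          simp
      _ = pairs ((a :: F a) ++ [a₂])
            ++ pairs (a₂ :: ((F a₂ ++ (T.map fun a => a :: F a).flatten) ++ [c])) :=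
          pairs_append_cons _ _ _
      _ = pairs ((a :: F a) ++ [a₂])
            ++ pairs (((a₂ :: T).map fun a => a :: F a).flatten ++ [c]) := by
          rw [hflat]; simp
      _ = _ := by
          rw [ih]; simp [List.flatMap]

/-! ### Chain facts for a block of the subdivision -/

section block
variable {b : ℝ × ℝ}

lemma seg_refl (x : ℝ × ℝ) : x ∈ segment ℝ x b := left_mem_segment ℝ x b

lemma seg_trans {u v w : ℝ × ℝ} (h1 : v ∈ segment ℝ u b) (h2 : w ∈ segment ℝ v b) :
    w ∈ segment ℝ u b :=
  (convex_segment u b).segment_subset h1 (right_mem_segment ℝ u b) h2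

lemma block_chain {l : List (ℝ × ℝ)} {a : ℝ × ℝ}
    (h : List.Chain' (fun u v => v ∈ segment ℝ u b) (a :: l)) :
    List.Chain' (fun u v => v ∈ segment ℝ u b) ((a :: l) ++ [b]) := by
  refine List.IsChain.append h (List.isChain_singleton b) ?_
  intro x hx y hy
  simp only [List.head?_cons, Option.mem_def, Option.some.injEq] at hy
  subst hy
  exact right_mem_segment ℝ x b

end block

/-- If `T` is a 2-optimal tour for `V`, `V'` is a subdivision for `(V, T)` and
`T'` is the tour of `V'` induced by `V'`, then `T'` is a 2-optimal tour
for `V'`. -/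
theorem subdivision_preserves_two_optimality (V V' : Finset (ℝ × ℝ))
    (T T' : List (ℝ × ℝ)) (hT : IsTour V T) (h2 : IsTwoOptimal 2 T)
    (hT' : IsTour V' T') (hind : InducedBy T T') :
    IsTwoOptimal 2 T' := by
  obtain ⟨F, hTeq, hF⟩ := hind
  subst hTeq
  cases T with
  | nil => intro e he; simp at he
  | cons t Ts =>
    -- the edge list of the subdivided tour decomposes into blocks
    have hM : ((t :: Ts).map fun a => a :: F a).flatten
        = t :: (F t ++ (Ts.map fun a => a :: F a).flatten) := by simp
    have hzip : (((t :: Ts).map fun a => a :: F a).flatten).zip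
          ((((t :: Ts).map fun a => a :: F a).flatten).rotate 1)
        = ((t :: Ts).zip ((t :: Ts).rotate 1)).flatMap
            (fun e => pairs ((e.1 :: F e.1) ++ [e.2])) := by
      rw [List.rotate_cons_succ, List.rotate_zero]
      conv_lhs => rw [hM]
      rw [List.rotate_cons_succ, List.rotate_zero]
      rw [show (F t ++ (Ts.map fun a => a :: F a).flatten) ++ [t]
            = (t :: (F t ++ (Ts.map fun a => a :: F a).flatten)).tail ++ [t] from rfl]
      rw [← pairs_eq_zip, ← hM]
      exact structural F (t :: Ts) t (by simp)
    intro e' he' f' hf' hne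
    rw [hzip, List.mem_flatMap] at he' hf'
    obtain ⟨e, he, he'⟩ := he'
    obtain ⟨f, hf, hf'⟩ := hf'
    -- chain facts for each block
    have hchE : List.Chain' (fun u v => v ∈ segment ℝ u e.2) ((e.1 :: F e.1) ++ [e.2]) :=
      block_chain (hF e he).2
    have hchF : List.Chain' (fun u v => v ∈ segment ℝ u f.2) ((f.1 :: F f.1) ++ [f.2]) :=
      block_chain (hF f hf).2
    by_cases hef : e = f
    · -- same parent edge
      subst hef
      have horder := pairs_order (R := fun u v => v ∈ segment ℝ u e.2)
        seg_refl (fun h1 h2 => seg_trans h1 h2) hchE e' he' f' hf' hne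
      have hee : e'.2 ∈ segment ℝ e'.1 e.2 := pairs_chain hchE e' he'
      have hff : f'.2 ∈ segment ℝ f'.1 e.2 := pairs_chain hchE f' hf'
      rcases horder with h | h
      · exact key_same hee h hff
      · have := key_same hff h hee
        have c1 := pdist_comm f'.1 e'.1
        have c2 := pdist_comm f'.2 e'.2
        linarith
    · -- distinct parent edges: use 2-optimality of T
      have h2opt := h2 e he f hf hef
      have ha' : e'.1 ∈ segment ℝ e.1 e.2 := by
        have := pairs_head (R := fun u v => v ∈ segment ℝ u e.2)
          seg_refl (fun h1 h2 => seg_trans h1 h2) (p := e.1) (l := F e.1 ++ [e.2])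
          (by simpa using hchE) e' (by simpa using he')
        exact this
      have hb' : e'.2 ∈ segment ℝ e'.1 e.2 := pairs_chain hchE e' he'
      have hx' : f'.1 ∈ segment ℝ f.1 f.2 := by
        have := pairs_head (R := fun u v => v ∈ segment ℝ u f.2)
          seg_refl (fun h1 h2 => seg_trans h1 h2) (p := f.1) (l := F f.1 ++ [f.2])
          (by simpa using hchF) f' (by simpa using hf')
        exact this
      have hy' : f'.2 ∈ segment ℝ f'.1 f.2 := pairs_chain hchF f' hf'
      exact key_diff ha' hb' hx' hy' h2opt
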